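/- Let 𝒳 be a sofic shift which is not minimal. Then there exists a subshift 𝒴 (over some finite alphabet Y) conjugate to 𝒳, together with a non-empty word z ∈ L(𝒴), such that zⁿ ∈ L(𝒴) for all n ≥ 1 and the set of letters occurring in z is a proper subset of alph(𝒴). -/

import Mathlib

/-- The shift map on biinfinite sequences. -/
def shiftMap (X : Type*) : (ℤ → X) → (ℤ → X) := fun x i => x (i + 1)

/-- A subshift: a non-empty, closed, shift-invariant subset of `X^ℤ`. -/
def IsSubshift {X : Type*} [TopologicalSpace X] (𝒳 : Set (ℤ → X)) : Prop :=
  𝒳.Nonempty ∧ IsClosed 𝒳 ∧ shiftMap X '' 𝒳 = 𝒳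

/-- The finite word `x_i x_{i+1} ⋯ x_{i+n-1}` read in the point `x`. -/
def wordAt {X : Type*} (x : ℤ → X) (i : ℤ) (n : ℕ) : List X :=
  (List.range n).map fun k => x (i + k)

/-- The language of a subshift: the set of (non-empty) finite factors of its points. -/
def shiftLang {X : Type*} (𝒳 : Set (ℤ → X)) : Set (List X) :=
  {w | w ≠ [] ∧ ∃ x ∈ 𝒳, ∃ i : ℤ, w = wordAt x i w.length}

/-- Two subshifts are (topologically) conjugate if there is a homeomorphism
between them commuting with the respective shift maps. -/
def AreConjugate {X Y : Type*} [TopologicalSpace X] [TopologicalSpace Y]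
    (𝒳 : Set (ℤ → X)) (𝒴 : Set (ℤ → Y)) : Prop :=
  ∃ φ : 𝒳 ≃ₜ 𝒴, ∀ x x' : 𝒳, (x' : ℤ → X) = shiftMap X x →
    (φ x' : ℤ → Y) = shiftMap Y (φ x)

/-- The `n`-th power (concatenation) of a word. -/
def wordPow {X : Type*} (n : ℕ) (u : List X) : List X := (List.replicate n u).flatten

-- helpers

lemma wordAt_def {X : Type*} (x : ℤ → X) (i : ℤ) (n : ℕ) :
    wordAt x i n = (List.range n).map (fun k : ℕ => x (i + (k:ℤ))) := by
  unfold wordAt; simp [List.map_flatMap, ← List.map_eq_flatMap]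

lemma wordAt_length {X : Type*} (x : ℤ → X) (i : ℤ) (n : ℕ) : (wordAt x i n).length = n := by
  simp [wordAt_def]

lemma wordAt_ne_nil {X : Type*} (x : ℤ → X) (i : ℤ) {n : ℕ} (hn : 1 ≤ n) :
    wordAt x i n ≠ [] := by
  intro h
  have := congrArg List.length h
  simp [wordAt_length] at this
  omega

lemma wordAt_append {X : Type*} (x : ℤ → X) (i : ℤ) (m n : ℕ) :
    wordAt x i (m + n) = wordAt x i m ++ wordAt x (i + m) n := by
  simp only [wordAt_def, List.range_add, List.map_append, List.map_map]
  congr 1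
  apply List.map_congr_left
  intro a _
  simp only [Function.comp_apply]
  congr 1
  push_cast
  ring

lemma mem_shiftLang_wordAt {X : Type*} {𝒳 : Set (ℤ → X)} {x : ℤ → X} (hx : x ∈ 𝒳)
    (i : ℤ) {n : ℕ} (hn : 1 ≤ n) : wordAt x i n ∈ shiftLang 𝒳 :=
  ⟨wordAt_ne_nil x i hn, x, hx, i, by rw [wordAt_length]⟩

lemma infix_mem_shiftLang {X : Type*} {𝒳 : Set (ℤ → X)} {a b c : List X}
    (h : a ++ b ++ c ∈ shiftLang 𝒳) (hb : b ≠ []) : b ∈ shiftLang 𝒳 := by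
  obtain ⟨-, x, hx, i, he⟩ := h
  rw [List.length_append, List.length_append] at he
  rw [wordAt_append, wordAt_append] at he
  have h12 := List.append_inj he (by simp [wordAt_length])
  have h2 := (List.append_inj h12.1 (by simp [wordAt_length])).2
  exact ⟨hb, x, hx, i + a.length, h2⟩

lemma shift_mem {X : Type*} [TopologicalSpace X] {𝒳 : Set (ℤ → X)}
    (hinv : shiftMap X '' 𝒳 = 𝒳) (j : ℤ) :
    ∀ x ∈ 𝒳, (fun k => x (k + j)) ∈ 𝒳 := by
  induction j using Int.induction_on with
  | zero => intro x hx; simpa using hx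
  | succ j ih =>
    intro x hx
    have hy := ih x hx
    have : shiftMap X (fun k => x (k + j)) ∈ 𝒳 := by
      rw [← hinv]; exact ⟨_, hy, rfl⟩
    convert this using 1
    funext k
    simp only [shiftMap]
    congr 1
    ring
  | pred j ih =>
    intro x hx
    have hy := ih x hx
    rw [← hinv] at hy
    obtain ⟨y', hy', hse⟩ := hy
    convert hy' using 1
    funext k
    have := congrFun hse (k - 1)
    simp only [shiftMap] at this
    rw [sub_add_cancel] at this
    rw [this]
    congr 1
    ring

lemma wordAt_eq_iff {X : Type*} {x : ℤ → X} {t : ℤ} {n : ℕ} {f : ℕ → X} :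
    wordAt x t n = (List.range n).map f ↔ ∀ m < n, x (t + m) = f m := by
  rw [wordAt_def, List.map_inj_left]
  simp [List.mem_range]

lemma wordPow_succ {X : Type*} (n : ℕ) (u : List X) :
    wordPow (n + 1) u = u ++ wordPow n u := by
  simp [wordPow, List.replicate_succ]

lemma wordPow_map_range {α : Type*} {f : ℕ → α} {L : ℕ}
    (hf : ∀ m, f (L + m) = f m) :
    ∀ n, wordPow n ((List.range L).map f) = (List.range (n * L)).map f := by
  intro n
  induction n with
  | zero => simp [wordPow]
  | succ n ih =>
    rw [wordPow_succ, ih]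
    have : (n + 1) * L = L + n * L := by ring
    rw [this, List.range_add, List.map_append, List.map_map]
    congr 1
    apply List.map_congr_left
    intro a _
    exact (hf a).symm

lemma wordPow_ne_nil {X : Type*} {n : ℕ} (hn : 1 ≤ n) {u : List X} (hu : u ≠ []) :
    wordPow n u ≠ [] := by
  obtain ⟨m, rfl⟩ : ∃ m, n = m + 1 := ⟨n - 1, by omega⟩
  rw [wordPow_succ]
  simp [hu]

lemma mem_of_words {X : Type*} [TopologicalSpace X] [DiscreteTopology X]
    {𝒳' : Set (ℤ → X)} (h : IsSubshift 𝒳') {x : ℤ → X}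
    (hall : ∀ n : ℕ, wordAt x (-(n:ℤ)) (2*n+1) ∈ shiftLang 𝒳') : x ∈ 𝒳' := by
  have H : ∀ n : ℕ, ∃ z ∈ 𝒳', ∀ k : ℤ, -(n:ℤ) ≤ k → k ≤ n → z k = x k := by
    intro n
    obtain ⟨-, y, hy, i, he⟩ := hall n
    rw [wordAt_length] at he
    refine ⟨fun k => y (k + (i + n)), shift_mem h.2.2 _ y hy, ?_⟩
    intro k h1 h2
    rw [wordAt_def y] at he
    have he' := wordAt_eq_iff.mp he
    have hm : (((k + n).toNat : ℤ)) = k + n := Int.toNat_of_nonneg (by omega)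
    have := he' (k + n).toNat (by omega)
    rw [hm] at this
    have e1 : -(n:ℤ) + (k + n) = k := by ring
    have e2 : i + (k + n) = k + (i + n) := by ring
    rw [e1, e2] at this
    exact this.symm
  choose z hz hzx using H
  have htend : Filter.Tendsto z Filter.atTop (nhds x) := by
    rw [tendsto_pi_nhds]
    intro k
    apply tendsto_atTop_of_eventually_const (i₀ := k.natAbs)
    intro n hn
    exact hzx n k (by omega) (by omega)
  exact h.2.1.mem_of_tendsto htend (Filter.Eventually.of_forall hz)

lemma exists_sep {X : Type*} [TopologicalSpace X] [DiscreteTopology X]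
    {𝒳' 𝒳 : Set (ℤ → X)} (h' : IsSubshift 𝒳') (hsub : 𝒳' ⊆ 𝒳) (hne : 𝒳' ≠ 𝒳) :
    ∃ w, w ∈ shiftLang 𝒳 ∧ w ∉ shiftLang 𝒳' := by
  obtain ⟨x, hx, hx'⟩ := Set.exists_of_ssubset (HasSubset.Subset.ssubset_of_ne hsub hne)
  by_contra hcon
  push_neg at hcon
  apply hx'
  apply mem_of_words h'
  intro n
  exact hcon _ (mem_shiftLang_wordAt hx _ (by omega))

lemma wordAt_one {X : Type*} (x : ℤ → X) (t : ℤ) : wordAt x t 1 = [x t] := by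
  simp [wordAt_def, List.range_succ]

lemma wordAt_getElem {X : Type*} (x : ℤ → X) (i : ℤ) (n m : ℕ)
    (h : m < (wordAt x i n).length) : (wordAt x i n)[m] = x (i + m) := by
  simp [wordAt_def]


set_option maxHeartbeats 1000000 in
/-- A sofic shift which is not minimal is conjugate to a subshift `𝒴` having a
non-empty word `z` in its language with `zⁿ ∈ L(𝒴)` for all `n ≥ 1` and whose set
of letters is a proper subset of the letters of `𝒴`. -/
theorem conjugate_with_word_avoiding_letter {X : Type*} [Fintype X] [TopologicalSpace X]
    [DiscreteTopology X] (𝒳 : Set (ℤ → X)) (h𝒳 : IsSubshift 𝒳)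
    (hsofic : Language.IsRegular (shiftLang 𝒳))
    (hnotmin : ¬ ∀ 𝒴 : Set (ℤ → X), IsSubshift 𝒴 → 𝒴 ⊆ 𝒳 → 𝒴 = 𝒳) :
    ∃ (Y : Type) (_ : Fintype Y) (_ : TopologicalSpace Y) (_ : DiscreteTopology Y)
      (𝒴 : Set (ℤ → Y)), IsSubshift 𝒴 ∧ AreConjugate 𝒳 𝒴 ∧
      ∃ z ∈ shiftLang 𝒴, (∀ n : ℕ, 1 ≤ n → wordPow n z ∈ shiftLang 𝒴) ∧
        {a : Y | a ∈ z} ⊂ {a : Y | [a] ∈ shiftLang 𝒴} := by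
  classical
  push_neg at hnotmin
  obtain ⟨𝒳', h𝒳', hsub, hne⟩ := hnotmin
  obtain ⟨w, hwX, hwX'⟩ := exists_sep h𝒳' hsub hne
  obtain ⟨x, hxP⟩ := h𝒳'.1
  have hx : x ∈ 𝒳 := hsub hxP
  set N := w.length with hNdef
  have hN1 : 1 ≤ N := List.length_pos_iff.mpr hwX.1
  -- DFA pumping
  obtain ⟨σty, instσ, M, hM⟩ := hsofic
  have hMacc : ∀ v : List X, v ∈ M.accepts ↔ v ∈ shiftLang 𝒳 := by
    intro v; rw [hM]; exact Iff.rfl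
  let g : ℕ → σty × (Fin N → X) :=
    fun a => (M.eval (wordAt x 0 (a+1)), fun k => x (((a+1 : ℕ) : ℤ) + (k : ℕ)))
  have hex : ∃ a b : ℕ, a < b ∧ g a = g b := by
    obtain ⟨a, b, hab, heq⟩ := Finite.exists_ne_map_eq_of_infinite g
    rcases lt_or_gt_of_ne hab with h | h
    · exact ⟨a, b, h, heq⟩
    · exact ⟨b, a, h, heq.symm⟩
  obtain ⟨a, b, hab, hgab⟩ := hex
  set i := a + 1 with hidef
  set j := b + 1 with hjdef
  have hi1 : 1 ≤ i := by omega
  set Lp := j - i with hLpdef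
  have hLp1 : 1 ≤ Lp := by omega
  have hjiLp : j = i + Lp := by omega
  have hstate : M.eval (wordAt x 0 i) = M.eval (wordAt x 0 j) := congrArg Prod.fst hgab
  have hblock : ∀ k : Fin N, x ((i : ℤ) + (k : ℕ)) = x ((j : ℤ) + (k : ℕ)) :=
    fun k => congrFun (congrArg Prod.snd hgab) k
  set y := wordAt x (i : ℤ) Lp with hydef
  set q := M.eval (wordAt x 0 i) with hqdef
  have huj : wordAt x 0 j = wordAt x 0 i ++ y := by
    rw [hjiLp, wordAt_append, zero_add]
  have hqy : M.evalFrom q y = q := by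
    calc M.evalFrom q y = M.evalFrom M.start (wordAt x 0 i ++ y) :=
          (M.evalFrom_of_append _ _ _).symm
    _ = M.eval (wordAt x 0 j) := by rw [← huj]; rfl
    _ = q := hstate.symm
  have hqacc : q ∈ M.accept :=
    (DFA.mem_accepts M).mp ((hMacc _).mpr (mem_shiftLang_wordAt hx 0 hi1))
  have hpowq : ∀ n, M.evalFrom q (wordPow n y) = q := by
    intro n
    induction n with
    | zero => simp [wordPow]
    | succ n ih => rw [wordPow_succ, DFA.evalFrom_of_append, hqy, ih]
  have hypow : ∀ n, 1 ≤ n → wordPow n y ∈ shiftLang 𝒳 := by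
    intro n hn
    have hacc : wordAt x 0 i ++ wordPow n y ∈ M.accepts := by
      rw [DFA.mem_accepts M]
      show M.evalFrom M.start _ ∈ M.accept
      rw [DFA.evalFrom_of_append]
      show M.evalFrom q _ ∈ M.accept
      rw [hpowq]
      exact hqacc
    have hmem := (hMacc _).mp hacc
    exact infix_mem_shiftLang (a := wordAt x 0 i) (c := [])
      (by simpa using hmem) (wordPow_ne_nil hn (wordAt_ne_nil _ _ hLp1))
  -- the periodic word
  set F : ℕ → X := fun m => x ((i : ℤ) + ((m % Lp : ℕ) : ℤ)) with hFdef
  have hFper : ∀ m, F (Lp + m) = F m := by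
    intro m
    simp only [hFdef, Nat.add_mod_left]
  have hyF : y = (List.range Lp).map F := by
    rw [hydef, wordAt_def]
    apply List.map_congr_left
    intro m hm
    rw [List.mem_range] at hm
    simp only [hFdef, Nat.mod_eq_of_lt hm]
  have hC : ∀ m : ℕ, m < Lp + N → x ((i : ℤ) + (m : ℤ)) = F m := by
    intro m
    induction m using Nat.strong_induction_on with
    | _ m ih =>
      intro hm
      by_cases hcase : m < Lp
      · simp only [hFdef, Nat.mod_eq_of_lt hcase]
      · have hr : m - Lp < N := by omega
        have h1 : x ((i : ℤ) + m) = x ((i : ℤ) + ((m - Lp : ℕ) : ℤ)) := by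
          have hb := (hblock ⟨m - Lp, hr⟩).symm
          have he : (i : ℤ) + (m : ℤ) = (j : ℤ) + ((m - Lp : ℕ) : ℤ) := by omega
          rw [he]
          exact hb
        rw [h1, ih (m - Lp) (by omega) (by omega)]
        conv_rhs => rw [show m = Lp + (m - Lp) from by omega, hFper]
  -- pieces of the periodic point occur in 𝒳
  have hW : ∀ n, 1 ≤ n → (List.range (n * Lp + (N - 1))).map F ∈ shiftLang 𝒳 := by
    intro n hn
    set K := n + N with hKdef
    have h2 : K * Lp = n * Lp + N * Lp := by ring
    have h3 : N ≤ N * Lp := Nat.le_mul_of_pos_right N (by omega)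
    have hKL : n * Lp + (N - 1) ≤ K * Lp := by omega
    have hKpow : wordPow K y ∈ shiftLang 𝒳 := hypow K (by omega)
    rw [hyF, wordPow_map_range hFper] at hKpow
    have hsplit : List.range (K * Lp) =
        List.range (n * Lp + (N - 1)) ++
          (List.range (K * Lp - (n * Lp + (N - 1)))).map ((n * Lp + (N - 1)) + ·) := by
      rw [← List.range_add]
      congr 1
      omega
    rw [hsplit, List.map_append] at hKpow
    refine infix_mem_shiftLang (a := []) (c := _) (by simpa using hKpow) ?_
    have hlen : 1 ≤ n * Lp + (N - 1) := by nlinarith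
    intro hnil
    have := congrArg List.length hnil
    simp at this
    omega
  have hWpt : ∀ n, 1 ≤ n → ∃ x' ∈ 𝒳, ∃ t : ℤ,
      ∀ m, m < n * Lp + (N - 1) → x' (t + m) = F m := by
    intro n hn
    obtain ⟨-, x', hx'mem, t, he⟩ := hW n hn
    rw [List.length_map, List.length_range] at he
    exact ⟨x', hx'mem, t, wordAt_eq_iff.mp he.symm⟩
  -- the alphabet
  set c := Fintype.card X with hcdef
  set eX : X ≃ Fin c := Fintype.equivFin X with heX
  let φ : (ℤ → X) → (ℤ → (Fin N → Fin c)) := fun u t k => eX (u (t + (k : ℕ)))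
  set 𝒴 := φ '' 𝒳 with h𝒴def
  have hφcont : Continuous φ := by
    apply continuous_pi
    intro t
    apply continuous_pi
    intro k
    exact (continuous_of_discreteTopology (f := ⇑eX)).comp (continuous_apply _)
  have hφσ : ∀ u : ℤ → X, φ (shiftMap X u) = shiftMap (Fin N → Fin c) (φ u) := by
    intro u
    funext t k
    simp only [φ, shiftMap]
    congr 2
    ring
  have hsubY : IsSubshift 𝒴 := by
    refine ⟨h𝒳.1.image φ, ?_, ?_⟩
    · exact ((h𝒳.2.1.isCompact).image hφcont).isClosed
    · rw [h𝒴def, ← Set.image_comp]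
      have hcomm : shiftMap (Fin N → Fin c) ∘ φ = φ ∘ shiftMap X := by
        funext u
        exact (hφσ u).symm
      rw [hcomm, Set.image_comp, h𝒳.2.2]
  -- conjugacy
  have hdec : ∀ u : ℤ → X, (fun t => eX.symm (φ u t ⟨0, hN1⟩)) = u := by
    intro u
    funext t
    simp [φ]
  let e : 𝒳 ≃ ↥𝒴 :=
    { toFun := fun u => ⟨φ u, u.1, u.2, rfl⟩
      invFun := fun v => ⟨fun t => eX.symm (v.1 t ⟨0, hN1⟩), by
        obtain ⟨v, u, hu, rfl⟩ := v
        rw [hdec]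
        exact hu⟩
      left_inv := fun u => Subtype.ext (hdec u.1)
      right_inv := fun v => Subtype.ext (by
        obtain ⟨v, u, hu, rfl⟩ := v
        simp only
        rw [hdec]) }
  have hecont : Continuous e := Continuous.subtype_mk (hφcont.comp continuous_subtype_val) _
  haveI : CompactSpace ↥𝒳 := isCompact_iff_compactSpace.mp h𝒳.2.1.isCompact
  have hconj : AreConjugate 𝒳 𝒴 := by
    refine ⟨hecont.homeoOfEquivCompactToT2, ?_⟩
    intro u u' hshift
    show (φ u'.1 : ℤ → (Fin N → Fin c)) = shiftMap _ (φ u.1)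
    rw [hshift]
    exact hφσ u.1
  -- the word z
  set G : ℕ → (Fin N → Fin c) := fun m k => eX (F (m + (k : ℕ))) with hGdef
  have hGper : ∀ m, G (Lp + m) = G m := by
    intro m
    funext k
    simp only [hGdef]
    rw [show Lp + m + (k : ℕ) = Lp + (m + (k : ℕ)) from by ring, hFper]
  set z := (List.range Lp).map G with hzdef
  have hzpow : ∀ n, wordPow n z = (List.range (n * Lp)).map G := wordPow_map_range hGper
  have hzne : z ≠ [] := by
    have hzl : z.length = Lp := by rw [hzdef]; simp
    intro hnil
    rw [hnil] at hzl
    simp at hzl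
    omega
  have key : ∀ n, 1 ≤ n → ∃ x' ∈ 𝒳, ∃ t : ℤ, ∀ m, m < n * Lp → φ x' (t + m) = G m := by
    intro n hn
    obtain ⟨x', hx', t, hco⟩ := hWpt n hn
    refine ⟨x', hx', t, ?_⟩
    intro m hm
    funext k
    have hmk : m + (k : ℕ) < n * Lp + (N - 1) := by
      have := k.isLt
      omega
    have hc := hco (m + (k : ℕ)) hmk
    simp only [φ, hGdef]
    rw [← hc]
    congr 1
    push_cast
    ring
  have hzmem : ∀ n, 1 ≤ n → wordPow n z ∈ shiftLang 𝒴 := by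
    intro n hn
    obtain ⟨x', hx', t, hc⟩ := key n hn
    refine ⟨wordPow_ne_nil hn hzne, φ x', ⟨x', hx', rfl⟩, t, ?_⟩
    rw [hzpow]
    rw [List.length_map, List.length_range]
    exact (wordAt_eq_iff.mpr fun m hm => hc m hm).symm
  have hz1 : z ∈ shiftLang 𝒴 := by
    have h1 := hzmem 1 le_rfl
    rwa [show wordPow 1 z = z from by simp [wordPow]] at h1
  refine ⟨Fin N → Fin c, inferInstance, inferInstance, inferInstance, 𝒴,
    hsubY, hconj, z, hz1, hzmem, ?_⟩
  rw [Set.ssubset_def]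
  constructor
  · -- every letter of z is a letter of 𝒴
    intro aelt ha
    simp only [Set.mem_setOf_eq] at ha ⊢
    rw [hzdef, List.mem_map] at ha
    obtain ⟨m, hmr, rfl⟩ := ha
    rw [List.mem_range] at hmr
    obtain ⟨x', hx', t, hc⟩ := key 1 le_rfl
    refine ⟨by simp, φ x', ⟨x', hx', rfl⟩, t + m, ?_⟩
    rw [List.length_singleton, wordAt_one, hc m (by omega)]
  · -- the block of w is a letter of 𝒴 but no letter of z
    intro hcon
    set bb : Fin N → Fin c := fun k => eX (w[(k : ℕ)]'(lt_of_lt_of_eq k.isLt hNdef))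
      with hbbdef
    have hb1 : [bb] ∈ shiftLang 𝒴 := by
      obtain ⟨hwne, x₀, hx₀, t₀, hw0⟩ := hwX
      refine ⟨by simp, φ x₀, ⟨x₀, hx₀, rfl⟩, t₀, ?_⟩
      rw [List.length_singleton, wordAt_one]
      congr 1
      funext k
      have hgw : w[(k : ℕ)]'(lt_of_lt_of_eq k.isLt hNdef) = x₀ (t₀ + (k : ℕ)) := by
        rw [List.getElem_of_eq hw0]
        exact wordAt_getElem _ _ _ _ _
      simp only [hbbdef, φ, hgw]
    have hb2 : bb ∉ {a : Fin N → Fin c | a ∈ z} := by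
      intro hbz
      simp only [Set.mem_setOf_eq, hzdef, List.mem_map] at hbz
      obtain ⟨m, hmr, heq⟩ := hbz
      rw [List.mem_range] at hmr
      have hww : w = wordAt x ((i : ℤ) + (m : ℤ)) N := by
        apply List.ext_getElem (by rw [wordAt_length, hNdef])
        intro k hk1 hk2
        rw [wordAt_getElem]
        have hkN : k < N := by omega
        have h1 : F (m + k) = w[k]'(hk1) := by
          have := congrFun heq ⟨k, hkN⟩
          simp only [hGdef, hbbdef] at this
          exact eX.injective this
        rw [← h1, ← hC (m + k) (by omega)]
        congr 1
        push_cast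
        ring
      apply hwX'
      rw [hww]
      exact mem_shiftLang_wordAt hxP _ hN1
    exact hb2 (hcon hb1)
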